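/- arXiv:1611.06650 — 7 statements merged into one kernel-verified Lean document; each statement's English description precedes it below -/
import Mathlib

section
/- The truncated binary entropy is subadditive: for all reals a, b ≥ 0, hc(a + b) ≤ hc(a) + hc(b). -/
open Real

/-- The base-2 binary entropy function, with the convention `0 * log 0 = 0`. -/
noncomputable def binEnt (x : ℝ) : ℝ :=
  -(x * Real.logb 2 x) - (1 - x) * Real.logb 2 (1 - x)

/-- The truncated binary entropy `hc(x) = h(min(x, 1/2))`. -/
noncomputable def hc (x : ℝ) : ℝ := binEnt (min x (1 / 2))

lemma binEnt_eq (x : ℝ) : binEnt x = Real.binEntropy x / Real.log 2 := by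
  simp [binEnt, Real.binEntropy, Real.logb, Real.log_inv]
  ring

lemma binEntropy_subadd {x y : ℝ} (hx : 0 ≤ x) (hy : 0 ≤ y) (hxy : x + y ≤ 1) :
    Real.binEntropy (x + y) ≤ Real.binEntropy x + Real.binEntropy y := by
  rcases eq_or_lt_of_le (by positivity : (0:ℝ) ≤ x + y) with h | h
  · simp [← h, (by linarith [h.symm ▸ hx, h.symm ▸ hy] : x = 0), (by linarith : y = 0)]
  set s := x + y with hs
  have hcc := Real.strictConcave_binEntropy.concaveOn
  have key : ∀ t : ℝ, 0 ≤ t → t ≤ s → (t / s) * Real.binEntropy s ≤ Real.binEntropy t := by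
    intro t ht hts
    have h1 : (1 - t/s) • Real.binEntropy 0 + (t/s) • Real.binEntropy s ≤
        Real.binEntropy ((1 - t/s) • (0:ℝ) + (t/s) • s) := by
      apply hcc.2 (by simp [Set.mem_Icc] : (0:ℝ) ∈ Set.Icc (0:ℝ) 1)
        (by constructor <;> linarith : s ∈ Set.Icc (0:ℝ) 1)
        (by have : t/s ≤ 1 := by rw [div_le_one h]; exact hts
            linarith)
        (by positivity) (by ring)
    have h2 : (1 - t/s) • (0:ℝ) + (t/s) • s = t := by
      field_simp
      rw [smul_zero, zero_add, smul_eq_mul, div_mul_cancel₀ t h.ne']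
    rw [h2] at h1
    simpa using h1
  have kx := key x hx (by linarith)
  have ky := key y hy (by linarith)
  have : (x / s) * Real.binEntropy s + (y / s) * Real.binEntropy s ≤
      Real.binEntropy x + Real.binEntropy y := by linarith
  calc Real.binEntropy s = (x / s + y / s) * Real.binEntropy s := by
        field_simp
        rw [← hs]
    _ ≤ _ := by linarith [this]

lemma binEnt_subadd {x y : ℝ} (hx : 0 ≤ x) (hy : 0 ≤ y) (hxy : x + y ≤ 1) :
    binEnt (x + y) ≤ binEnt x + binEnt y := by
  rw [binEnt_eq, binEnt_eq, binEnt_eq, ← add_div, div_le_div_iff_of_pos_right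
    (Real.log_pos (by norm_num))]
  exact binEntropy_subadd hx hy hxy

lemma binEnt_nonneg {x : ℝ} (hx : 0 ≤ x) (hx1 : x ≤ 1) : 0 ≤ binEnt x := by
  rw [binEnt_eq]
  exact div_nonneg (Real.binEntropy_nonneg hx hx1) (Real.log_nonneg (by norm_num))

lemma binEnt_mono {x y : ℝ} (hx : 0 ≤ x) (hxy : x ≤ y) (hy : y ≤ 1/2) :
    binEnt x ≤ binEnt y := by
  rw [binEnt_eq, binEnt_eq]
  rw [div_le_div_iff_of_pos_right (Real.log_pos (by norm_num))]
  exact Real.binEntropy_strictMonoOn.monotoneOn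
    ⟨hx, by norm_num; linarith⟩ ⟨by linarith, by norm_num; linarith⟩ hxy

/-- `hc` is subadditive: for all `a, b ≥ 0`, `hc(a + b) ≤ hc(a) + hc(b)`. -/
theorem stmt_3 (a b : ℝ) (ha : 0 ≤ a) (hb : 0 ≤ b) :
    hc (a + b) ≤ hc a + hc b := by
  unfold hc
  rcases le_or_gt (a + b) (1/2) with hab | hab
  · rw [min_eq_left hab, min_eq_left (by linarith), min_eq_left (by linarith)]
    exact binEnt_subadd ha hb (by linarith)
  rcases le_or_gt a (1/2) with ha2 | ha2
  · rcases le_or_gt b (1/2) with hb2 | hb2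
    · rw [min_eq_right (by linarith), min_eq_left ha2, min_eq_left hb2]
      have h1 : binEnt ((1/2 - b) + b) ≤ binEnt (1/2 - b) + binEnt b :=
        binEnt_subadd (by linarith) hb (by linarith)
      have h2 : binEnt (1/2 - b) ≤ binEnt a := binEnt_mono (by linarith) (by linarith) ha2
      have h3 : (1/2 - b) + b = 1/2 := by ring
      rw [h3] at h1
      linarith
    · rw [min_eq_right (show (1:ℝ)/2 ≤ a + b by linarith), min_eq_left ha2,
        min_eq_right hb2.le]
      have : 0 ≤ binEnt a := binEnt_nonneg ha (by linarith)
      linarith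
  · rw [min_eq_right (by linarith), min_eq_right (by linarith)]
    have : 0 ≤ binEnt (min b (1/2)) :=
      binEnt_nonneg (le_min hb (by norm_num)) (min_le_of_right_le (by norm_num))
    linarith
end

section
/- Let 𝒳, 𝒴, 𝒵 be finite sets, f : 𝒳 × 𝒴 → 𝒵 a function, and S ⊆ 𝒳 × 𝒴 a set (the support of an input distribution). Then S is structurally internal-trivial for f if and only if for every connected component C of the graph G_S, the function f is constant on C_A × C_B. -/
/-- The graph `G_S` on `𝒳 × 𝒴` induced by the set `S`: two distinct pairs of `S` are
adjacent iff they agree on one of their coordinates.  (Vertices outside `S` are isolated.) -/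
def inputGraph {𝒳 𝒴 : Type} (S : Set (𝒳 × 𝒴)) : SimpleGraph (𝒳 × 𝒴) where
  Adj a b := a ≠ b ∧ (a.1 = b.1 ∨ a.2 = b.2) ∧ a ∈ S ∧ b ∈ S
  symm := ⟨fun a b ⟨h1, h2, h3, h4⟩ => ⟨h1.symm, h2.imp Eq.symm Eq.symm, h4, h3⟩⟩
  loopless := ⟨fun a h => h.1 rfl⟩

/-- `S` is structurally internal-trivial for `f`: there are partitions of the projections
`S_A = ⋃ᵢ 𝒳ᵢ` and `S_B = ⋃ᵢ 𝒴ᵢ` with `S ⊆ ⋃ᵢ 𝒳ᵢ × 𝒴ᵢ` and `f` constant on each `𝒳ᵢ × 𝒴ᵢ`. -/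
def StructurallyInternalTrivial {𝒳 𝒴 𝒵 : Type} (f : 𝒳 × 𝒴 → 𝒵) (S : Set (𝒳 × 𝒴)) : Prop :=
  ∃ (I : Type) (XI : I → Set 𝒳) (YI : I → Set 𝒴),
    (Prod.fst '' S = ⋃ i, XI i) ∧ Pairwise (Function.onFun Disjoint XI) ∧
    (Prod.snd '' S = ⋃ i, YI i) ∧ Pairwise (Function.onFun Disjoint YI) ∧
    (S ⊆ ⋃ i, XI i ×ˢ YI i) ∧
    (∀ i : I, ∀ a ∈ XI i ×ˢ YI i, ∀ b ∈ XI i ×ˢ YI i, f a = f b)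

private lemma reach_block {𝒳 𝒴 : Type} {S : Set (𝒳 × 𝒴)} {I : Type}
    {XI : I → Set 𝒳} {YI : I → Set 𝒴}
    (hXd : Pairwise (Function.onFun Disjoint XI))
    (hYd : Pairwise (Function.onFun Disjoint YI))
    (hsub : S ⊆ ⋃ i, XI i ×ˢ YI i)
    {i : I} {v w : 𝒳 × 𝒴} (hv : v ∈ XI i ×ˢ YI i)
    (h : (inputGraph S).Reachable v w) : w ∈ XI i ×ˢ YI i := by
  obtain ⟨p⟩ := h
  induction p with
  | nil => exact hv
  | @cons a b c hadj p ih =>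
    apply ih
    obtain ⟨hne, hor, haS, hbS⟩ := hadj
    obtain ⟨j, hj⟩ := Set.mem_iUnion.mp (hsub hbS)
    have hij : i = j := by
      rcases hor with h1 | h2
      · by_contra hcon
        exact Set.disjoint_left.mp (hXd hcon) hv.1 (h1 ▸ hj.1)
      · by_contra hcon
        exact Set.disjoint_left.mp (hYd hcon) hv.2 (h2 ▸ hj.2)
    exact hij ▸ hj

/-- `S` is structurally internal-trivial for `f` iff for every connected component `C` of
`G_S` (given by a representative `v ∈ S`), `f` is constant on `C_A × C_B`. -/
theorem stmt_6 {𝒳 𝒴 𝒵 : Type} [Fintype 𝒳] [Fintype 𝒴] [Fintype 𝒵]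
    (f : 𝒳 × 𝒴 → 𝒵) (S : Set (𝒳 × 𝒴)) :
    StructurallyInternalTrivial f S ↔
      ∀ v ∈ S, ∀ (x x' : 𝒳) (y y' : 𝒴),
        (∃ b, (inputGraph S).Reachable v (x, b)) →
        (∃ a, (inputGraph S).Reachable v (a, y)) →
        (∃ b, (inputGraph S).Reachable v (x', b)) →
        (∃ a, (inputGraph S).Reachable v (a, y')) →
        f (x, y) = f (x', y') := by
  constructor
  · rintro ⟨I, XI, YI, _, hXd, _, hYd, hsub, hconst⟩
    rintro v hvS x x' y y' ⟨b1, hb1⟩ ⟨a1, ha1⟩ ⟨b2, hb2⟩ ⟨a2, ha2⟩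
    obtain ⟨i, hi⟩ := Set.mem_iUnion.mp (hsub hvS)
    have h1 := reach_block hXd hYd hsub hi hb1
    have h2 := reach_block hXd hYd hsub hi ha1
    have h3 := reach_block hXd hYd hsub hi hb2
    have h4 := reach_block hXd hYd hsub hi ha2
    exact hconst i (x, y) ⟨h1.1, h2.2⟩ (x', y') ⟨h3.1, h4.2⟩
  · intro h
    refine ⟨(inputGraph S).ConnectedComponent,
      fun c => {x | ∃ b, (x, b) ∈ S ∧ (inputGraph S).connectedComponentMk (x, b) = c},
      fun c => {y | ∃ a, (a, y) ∈ S ∧ (inputGraph S).connectedComponentMk (a, y) = c},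
      ?_, ?_, ?_, ?_, ?_, ?_⟩
    · ext x
      simp only [Set.mem_image, Set.mem_iUnion, Set.mem_setOf_eq]
      constructor
      · rintro ⟨⟨a, b⟩, hpS, rfl⟩
        exact ⟨_, b, hpS, rfl⟩
      · rintro ⟨c, b, hbS, -⟩
        exact ⟨(x, b), hbS, rfl⟩
    · intro c c' hne
      rw [Function.onFun, Set.disjoint_left]
      rintro x ⟨b1, hS1, hc1⟩ ⟨b2, hS2, hc2⟩
      apply hne
      rw [← hc1, ← hc2]
      by_cases hb : b1 = b2
      · rw [hb]
      · exact SimpleGraph.ConnectedComponent.sound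
          (SimpleGraph.Adj.reachable ⟨by simp [Prod.ext_iff, hb], Or.inl rfl, hS1, hS2⟩)
    · ext y
      simp only [Set.mem_image, Set.mem_iUnion, Set.mem_setOf_eq]
      constructor
      · rintro ⟨⟨a, b⟩, hpS, rfl⟩
        exact ⟨_, a, hpS, rfl⟩
      · rintro ⟨c, a, haS, -⟩
        exact ⟨(a, y), haS, rfl⟩
    · intro c c' hne
      rw [Function.onFun, Set.disjoint_left]
      rintro y ⟨a1, hS1, hc1⟩ ⟨a2, hS2, hc2⟩
      apply hne
      rw [← hc1, ← hc2]
      by_cases ha : a1 = a2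
      · rw [ha]
      · exact SimpleGraph.ConnectedComponent.sound
          (SimpleGraph.Adj.reachable ⟨by simp [Prod.ext_iff, ha], Or.inr rfl, hS1, hS2⟩)
    · rintro ⟨x, y⟩ hxyS
      exact Set.mem_iUnion.mpr ⟨(inputGraph S).connectedComponentMk (x, y),
        ⟨y, hxyS, rfl⟩, ⟨x, hxyS, rfl⟩⟩
    · rintro c ⟨x, y⟩ ⟨⟨b1, hb1S, hb1c⟩, ⟨a1, ha1S, ha1c⟩⟩ ⟨x', y'⟩
        ⟨⟨b2, hb2S, hb2c⟩, ⟨a2, ha2S, ha2c⟩⟩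
      refine h (x, b1) hb1S x x' y y' ⟨b1, .refl _⟩ ?_ ?_ ?_
      · exact ⟨a1, SimpleGraph.ConnectedComponent.exact (hb1c.trans ha1c.symm)⟩
      · exact ⟨b2, SimpleGraph.ConnectedComponent.exact (hb1c.trans hb2c.symm)⟩
      · exact ⟨a2, SimpleGraph.ConnectedComponent.exact (hb1c.trans ha2c.symm)⟩
end

section
/- For all reals x, y > 0 and all p, q with 0 < q ≤ p < 1, the following identity holds: (1 − q/p)·((1−p)x + p·y)·hₑ(p·y/((1−p)x + p·y)) + ∫_p^1 (2pq/ℓ³)·((1−ℓ)x + ℓ·y)·hₑ(ℓ·y/((1−ℓ)x + ℓ·y)) dℓ = −( q·(1−p)·y + (1−p)·(1−q)·x·ln((1−p)·x/((1−p)x + p·y)) + (p·q·y²/x + (p + q − 2pq)·y)·ln(p·y/((1−p)x + p·y)) ), where ln denotes the natural logarithm. -/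
open Real Set

/-- The natural-log binary entropy `hₑ(t) = −t·ln t − (1−t)·ln(1−t)`,
with the convention `0 · ln 0 = 0`. -/
noncomputable def natEnt (t : ℝ) : ℝ :=
  -(t * Real.log t) - (1 - t) * Real.log (1 - t)

noncomputable def Faux (x y l : ℝ) : ℝ :=
  (y * l⁻¹) * (Real.log l + Real.log y - Real.log ((1-l)*x + l*y))
  + (x/2) * ((1-l)^2 * (l⁻¹)^2) * Real.log (1-l)
  - (x/2) * ((2*l-1) * (l⁻¹)^2) * (Real.log x - Real.log ((1-l)*x + l*y))
  - (y - y^2/(2*x)) * Real.log l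
  - ((y-x)^2/(2*x)) * Real.log ((1-l)*x + l*y)
  + (y/2) * l⁻¹

lemma Faux_deriv (x y : ℝ) (hx : 0 < x) (hy : 0 < y) (l : ℝ) (h0 : 0 < l) (h1 : l < 1) :
    HasDerivAt (Faux x y)
      ((1/l^3) * ((1-l)*x + l*y) * natEnt (l*y/((1-l)*x + l*y))) l := by
  have hl1 : (0:ℝ) < 1 - l := by linarith
  have hS0 : 0 < (1-l)*x + l*y := by positivity
  set S := (1-l)*x + l*y with hSdef
  have h1l : HasDerivAt (fun l : ℝ => 1 - l) (-1) l := by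
    simpa using (hasDerivAt_id l).const_sub (1:ℝ)
  have hSd : HasDerivAt (fun l : ℝ => (1-l)*x + l*y) (-1*x + 1*y) l :=
    (h1l.mul_const x).add ((hasDerivAt_id l).mul_const y)
  have hlogl : HasDerivAt Real.log l⁻¹ l := Real.hasDerivAt_log h0.ne'
  have hlogS : HasDerivAt (fun l : ℝ => Real.log ((1-l)*x + l*y)) ((-1*x + 1*y)/S) l :=
    hSd.log hS0.ne'
  have hlog1l : HasDerivAt (fun l : ℝ => Real.log (1-l)) ((-1)/(1-l)) l :=
    h1l.log hl1.ne'
  have hinv : HasDerivAt (fun l : ℝ => l⁻¹) (-(l^2)⁻¹) l := hasDerivAt_inv h0.ne'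
  have h2l1 : HasDerivAt (fun l : ℝ => 2*l - 1) 2 l := by
    simpa using ((hasDerivAt_id l).const_mul (2:ℝ)).sub_const (1:ℝ)
  have P1 := (hinv.const_mul y).mul ((hlogl.add_const (Real.log y)).sub hlogS)
  have P2 := (((h1l.pow 2).mul (hinv.pow 2)).const_mul (x/2)).mul hlog1l
  have P3 := ((h2l1.mul (hinv.pow 2)).const_mul (x/2)).mul (hlogS.const_sub (Real.log x))
  have P4 := hlogl.const_mul (y - y^2/(2*x))
  have P5 := hlogS.const_mul ((y-x)^2/(2*x))
  have P6 := hinv.const_mul (y/2)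
  have total := ((((P1.add P2).sub P3).sub P4).sub P5).add P6
  have htot : HasDerivAt (Faux x y) _ l := total
  convert htot using 1
  have hfrac : 1 - l*y/S = (1-l)*x/S := by
    rw [hSdef]; field_simp; ring
  unfold natEnt
  rw [hfrac, Real.log_div (by positivity) hS0.ne', Real.log_div (by positivity) hS0.ne',
    Real.log_mul h0.ne' hy.ne', Real.log_mul hl1.ne' hx.ne']
  rw [hSdef]
  push_cast
  simp only [Pi.pow_apply, Pi.mul_apply, Pi.sub_apply, Pi.add_apply]
  field_simp
  ring

/-- Closed form for the scaled information cost of the buzzer protocol for AND. -/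
theorem stmt_10 (x y p q : ℝ) (hx : 0 < x) (hy : 0 < y)
    (hq : 0 < q) (hqp : q ≤ p) (hp : p < 1) :
    (1 - q / p) * ((1 - p) * x + p * y) * natEnt (p * y / ((1 - p) * x + p * y))
      + ∫ ℓ in p..1,
          (2 * p * q / ℓ ^ 3) * ((1 - ℓ) * x + ℓ * y) * natEnt (ℓ * y / ((1 - ℓ) * x + ℓ * y))
    = -(q * (1 - p) * y
        + (1 - p) * (1 - q) * x * Real.log ((1 - p) * x / ((1 - p) * x + p * y))
        + (p * q * y ^ 2 / x + (p + q - 2 * p * q) * y)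
            * Real.log (p * y / ((1 - p) * x + p * y))) := by
  have hp0 : 0 < p := lt_of_lt_of_le hq hqp
  have h1p : 0 < 1 - p := by linarith
  have hS0 : 0 < (1-p)*x + p*y := by positivity
  have hentc : Continuous natEnt := by
    unfold natEnt
    exact (Real.continuous_mul_log.neg).sub
      (Real.continuous_mul_log.comp (continuous_const.sub continuous_id))
  have hScont : Continuous (fun ℓ : ℝ => (1-ℓ)*x + ℓ*y) := by fun_prop
  have hSpos : ∀ ℓ ∈ Icc p 1, 0 < (1-ℓ)*x + ℓ*y := by
    intro ℓ hl
    have h1 : 0 ≤ (1-ℓ)*x := mul_nonneg (by linarith [hl.2]) hx.le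
    have h2 : 0 < ℓ*y := mul_pos (hp0.trans_le hl.1) hy
    linarith
  have hlne : ∀ ℓ ∈ Icc p 1, ℓ ≠ 0 := fun ℓ hl => (hp0.trans_le hl.1).ne'
  -- continuity of integrand
  have hgcont : ContinuousOn
      (fun ℓ : ℝ => (2*p*q/ℓ^3) * ((1-ℓ)*x + ℓ*y) * natEnt (ℓ*y/((1-ℓ)*x + ℓ*y)))
      (Icc p 1) := by
    refine ContinuousOn.mul (ContinuousOn.mul ?_ hScont.continuousOn) ?_
    · exact continuousOn_const.div (by fun_prop) (fun ℓ hl => pow_ne_zero 3 (hlne ℓ hl))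
    · exact hentc.comp_continuousOn
        (ContinuousOn.div (by fun_prop) hScont.continuousOn (fun ℓ hl => (hSpos ℓ hl).ne'))
  have hint : IntervalIntegrable
      (fun ℓ : ℝ => (2*p*q/ℓ^3) * ((1-ℓ)*x + ℓ*y) * natEnt (ℓ*y/((1-ℓ)*x + ℓ*y)))
      MeasureTheory.volume p 1 :=
    ContinuousOn.intervalIntegrable (by rw [uIcc_of_le hp.le]; exact hgcont)
  -- continuity of antiderivative
  have hlinv : ContinuousOn (fun l : ℝ => l⁻¹) (Icc p 1) :=
    ContinuousOn.inv₀ continuousOn_id hlne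
  have hlogl : ContinuousOn (fun l : ℝ => Real.log l) (Icc p 1) :=
    ContinuousOn.log continuousOn_id hlne
  have hlogS : ContinuousOn (fun l : ℝ => Real.log ((1-l)*x + l*y)) (Icc p 1) :=
    ContinuousOn.log hScont.continuousOn (fun ℓ hl => (hSpos ℓ hl).ne')
  have hml : Continuous (fun l : ℝ => (1-l) * Real.log (1-l)) :=
    Real.continuous_mul_log.comp (continuous_const.sub continuous_id)
  have hG2 : ContinuousOn (fun l : ℝ =>
      (y * l⁻¹) * (Real.log l + Real.log y - Real.log ((1-l)*x + l*y))
      + (x/2) * ((1-l) * (l⁻¹)^2) * ((1-l) * Real.log (1-l))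
      - (x/2) * ((2*l-1) * (l⁻¹)^2) * (Real.log x - Real.log ((1-l)*x + l*y))
      - (y - y^2/(2*x)) * Real.log l
      - ((y-x)^2/(2*x)) * Real.log ((1-l)*x + l*y)
      + (y/2) * l⁻¹) (Icc p 1) := by
    refine ContinuousOn.add (ContinuousOn.sub (ContinuousOn.sub (ContinuousOn.sub
      (ContinuousOn.add ?_ ?_) ?_) ?_) ?_) ?_
    · exact (continuousOn_const.mul hlinv).mul ((hlogl.add continuousOn_const).sub hlogS)
    · exact (continuousOn_const.mul
        (((continuous_const.sub continuous_id).continuousOn).mul (hlinv.pow 2))).mul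
        hml.continuousOn
    · exact (continuousOn_const.mul
        ((by fun_prop : Continuous (fun l : ℝ => 2*l-1)).continuousOn.mul (hlinv.pow 2))).mul
        (continuousOn_const.sub hlogS)
    · exact continuousOn_const.mul hlogl
    · exact continuousOn_const.mul hlogS
    · exact continuousOn_const.mul hlinv
  have hFcont : ContinuousOn (fun l => 2*p*q * Faux x y l) (Icc p 1) := by
    refine ((continuousOn_const (c := 2*p*q)).mul hG2).congr ?_
    intro l hl
    simp only [Pi.mul_apply]
    unfold Faux
    ring
  have hFderiv : ∀ t ∈ Ioo p 1, HasDerivWithinAt (fun l => 2*p*q * Faux x y l)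
      ((2*p*q/t^3) * ((1-t)*x + t*y) * natEnt (t*y/((1-t)*x + t*y))) (Ioi t) t := by
    intro t ht
    have h := (Faux_deriv x y hx hy t (hp0.trans ht.1) ht.2).const_mul (2*p*q)
    have heq : (2*p*q/t^3) * ((1-t)*x + t*y) * natEnt (t*y/((1-t)*x + t*y))
        = 2*p*q * ((1/t^3) * ((1-t)*x + t*y) * natEnt (t*y/((1-t)*x + t*y))) := by ring
    rw [heq]
    exact h.hasDerivWithinAt
  have hFTC : (∫ ℓ in p..1,
        (2*p*q/ℓ^3) * ((1-ℓ)*x + ℓ*y) * natEnt (ℓ*y/((1-ℓ)*x + ℓ*y)))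
      = 2*p*q * Faux x y 1 - 2*p*q * Faux x y p :=
    intervalIntegral.integral_eq_sub_of_hasDeriv_right_of_le hp.le hFcont hFderiv hint
  rw [show (∫ ℓ in p..1,
        (2*p*q/ℓ^3) * ((1-ℓ)*x + ℓ*y) * natEnt (ℓ*y/((1-ℓ)*x + ℓ*y)))
      = 2*p*q * Faux x y 1 - 2*p*q * Faux x y p from hFTC]
  have hF1 : Faux x y 1 = -(x/2)*(Real.log x - Real.log y) - ((y-x)^2/(2*x))*Real.log y + y/2 := by
    unfold Faux
    norm_num
  rw [hF1]
  unfold Faux natEnt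
  have hfr : 1 - p*y/((1-p)*x + p*y) = (1-p)*x/((1-p)*x + p*y) := by
    field_simp
    ring
  rw [hfr, Real.log_div (by positivity) hS0.ne', Real.log_div (by positivity) hS0.ne',
    Real.log_mul hp0.ne' hy.ne', Real.log_mul h1p.ne' hx.ne']
  field_simp
  ring
end

section
/- Fix reals x, y > 0 and q ∈ (0,1), and define G : (0,1) → ℝ by G(p) = −( q·(1−p)·y + (1−p)·(1−q)·x·ln((1−p)·x/A(p)) + (p·q·y²/x + (p + q − 2pq)·y)·ln(p·y/A(p)) ), where A(p) = (1−p)·x + p·y and ln is the natural logarithm. Then G is twice differentiable on the interval (q,1), and for every p ∈ (q,1) its second derivative satisfies G″(p) = −(p − q)·x·y/((1−p)·p²·A(p)). -/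
private lemma HasDerivAt.congr_d {f : ℝ → ℝ} {a b p : ℝ} (h : HasDerivAt f a p)
    (e : a = b) : HasDerivAt f b p := e ▸ h

/-- split-log version of `G` -/
noncomputable def gtAux (x y q t : ℝ) : ℝ :=
  -(q*(1-t)*y
    + (1-t)*(1-q)*x * (Real.log (1-t) + Real.log x - Real.log ((1-t)*x+t*y))
    + (t*q*y^2/x + (t+q-2*t*q)*y) * (Real.log t + Real.log y - Real.log ((1-t)*x+t*y)))

/-- first derivative -/
noncomputable def gdAux (x y q p : ℝ) : ℝ :=
  -(-(q*y)
    + (-((1-q)*x) * (Real.log (1-p) + Real.log x - Real.log ((1-p)*x+p*y))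
       + (1-p)*(1-q)*x * (-1/(1-p) - (y-x)/((1-p)*x+p*y)))
    + ((q*y^2/x + (1-2*q)*y) * (Real.log p + Real.log y - Real.log ((1-p)*x+p*y))
       + (p*q*y^2/x + (p+q-2*p*q)*y) * (1/p - (y-x)/((1-p)*x+p*y))))

/-- second derivative -/
noncomputable def gddAux (x y q p : ℝ) : ℝ :=
  -(2*(-((1-q)*x)) * (-1/(1-p) - (y-x)/((1-p)*x+p*y))
    + (1-p)*(1-q)*x * (-1/(1-p)^2 + (y-x)^2/((1-p)*x+p*y)^2)
    + 2*(q*y^2/x + (1-2*q)*y) * (1/p - (y-x)/((1-p)*x+p*y))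
    + (p*q*y^2/x + (p+q-2*p*q)*y) * (-1/p^2 + (y-x)^2/((1-p)*x+p*y)^2))

section aux
variable {x y q p : ℝ}

lemma APos (hx : 0 < x) (hy : 0 < y) (hp0 : 0 < p) (hp1 : p < 1) :
    0 < (1-p)*x+p*y := by nlinarith

lemma hasDerivAt_gtAux (hx : 0 < x) (hy : 0 < y) (hp0 : 0 < p) (hp1 : p < 1) :
    HasDerivAt (fun t => gtAux x y q t) (gdAux x y q p) p := by
  have h1p : (0:ℝ) < 1 - p := by linarith
  have hA : 0 < (1-p)*x+p*y := APos hx hy hp0 hp1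
  have hA' : HasDerivAt (fun t : ℝ => (1-t)*x + t*y) (y-x) p := by
    have h : HasDerivAt (fun t : ℝ => (1-t)*x + t*y) ((0-1)*x + 1*y) p :=
      (((hasDerivAt_const p (1:ℝ)).sub (hasDerivAt_id' p)).mul_const x).add
        ((hasDerivAt_id' p).mul_const y)
    exact h.congr_d (by ring)
  have hL1 : HasDerivAt
      (fun t : ℝ => Real.log (1-t) + Real.log x - Real.log ((1-t)*x+t*y))
      (-1/(1-p) - (y-x)/((1-p)*x+p*y)) p := by
    have hlog1 : HasDerivAt (fun t : ℝ => Real.log (1-t)) ((0-1)/(1-p)) p :=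
      (((hasDerivAt_const p (1:ℝ)).sub (hasDerivAt_id' p)).log h1p.ne')
    exact ((hlog1.add_const (Real.log x)).sub (hA'.log hA.ne')).congr_d (by ring)
  have hL2 : HasDerivAt
      (fun t : ℝ => Real.log t + Real.log y - Real.log ((1-t)*x+t*y))
      (1/p - (y-x)/((1-p)*x+p*y)) p := by
    have hlogp : HasDerivAt (fun t : ℝ => Real.log t) p⁻¹ p := Real.hasDerivAt_log hp0.ne'
    exact ((hlogp.add_const (Real.log y)).sub (hA'.log hA.ne')).congr_d (by ring)
  have hT0 : HasDerivAt (fun t : ℝ => q*(1-t)*y) (-(q*y)) p := by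
    have h : HasDerivAt (fun t : ℝ => q*(1-t)*y) ((q*(0-1))*y) p :=
      (((hasDerivAt_const p (1:ℝ)).sub (hasDerivAt_id' p)).const_mul q).mul_const y
    exact h.congr_d (by ring)
  have hT1 : HasDerivAt (fun t : ℝ => (1-t)*(1-q)*x) (-((1-q)*x)) p := by
    have h : HasDerivAt (fun t : ℝ => (1-t)*(1-q)*x) (((0-1)*(1-q))*x) p :=
      (((hasDerivAt_const p (1:ℝ)).sub (hasDerivAt_id' p)).mul_const (1-q)).mul_const x
    exact h.congr_d (by ring)
  have hT2 : HasDerivAt (fun t : ℝ => t*q*y^2/x + (t+q-2*t*q)*y)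
      (q*y^2/x + (1-2*q)*y) p := by
    have h1 : HasDerivAt (fun t : ℝ => t*q*y^2/x) (1*q*y^2/x) p :=
      (((hasDerivAt_id' p).mul_const q).mul_const (y^2)).div_const x
    have h2 : HasDerivAt (fun t : ℝ => (t+q-2*t*q)*y) ((1 - 2*1*q)*y) p :=
      (((hasDerivAt_id' p).add_const q).sub
        (((hasDerivAt_id' p).const_mul 2).mul_const q)).mul_const y
    exact (h1.add h2).congr_d (by ring)
  simp only [gtAux, gdAux]
  exact ((hT0.add (hT1.mul hL1)).add (hT2.mul hL2)).neg.congr_d (by ring)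

lemma hasDerivAt_gdAux (hx : 0 < x) (hy : 0 < y) (hp0 : 0 < p) (hp1 : p < 1) :
    HasDerivAt (fun t => gdAux x y q t) (gddAux x y q p) p := by
  have h1p : (0:ℝ) < 1 - p := by linarith
  have hA : 0 < (1-p)*x+p*y := APos hx hy hp0 hp1
  have h1t : HasDerivAt (fun t : ℝ => 1-t) (0-1) p :=
    (hasDerivAt_const p (1:ℝ)).sub (hasDerivAt_id' p)
  have hA' : HasDerivAt (fun t : ℝ => (1-t)*x + t*y) (y-x) p := by
    have h : HasDerivAt (fun t : ℝ => (1-t)*x + t*y) ((0-1)*x + 1*y) p :=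
      ((h1t.mul_const x)).add ((hasDerivAt_id' p).mul_const y)
    exact h.congr_d (by ring)
  have hL1 : HasDerivAt
      (fun t : ℝ => Real.log (1-t) + Real.log x - Real.log ((1-t)*x+t*y))
      (-1/(1-p) - (y-x)/((1-p)*x+p*y)) p := by
    have hlog1 : HasDerivAt (fun t : ℝ => Real.log (1-t)) ((0-1)/(1-p)) p :=
      h1t.log h1p.ne'
    exact ((hlog1.add_const (Real.log x)).sub (hA'.log hA.ne')).congr_d (by ring)
  have hL2 : HasDerivAt
      (fun t : ℝ => Real.log t + Real.log y - Real.log ((1-t)*x+t*y))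
      (1/p - (y-x)/((1-p)*x+p*y)) p := by
    have hlogp : HasDerivAt (fun t : ℝ => Real.log t) p⁻¹ p := Real.hasDerivAt_log hp0.ne'
    exact ((hlogp.add_const (Real.log y)).sub (hA'.log hA.ne')).congr_d (by ring)
  have hT1 : HasDerivAt (fun t : ℝ => (1-t)*(1-q)*x) (-((1-q)*x)) p := by
    have h : HasDerivAt (fun t : ℝ => (1-t)*(1-q)*x) (((0-1)*(1-q))*x) p :=
      ((h1t.mul_const (1-q)).mul_const x)
    exact h.congr_d (by ring)
  have hT2 : HasDerivAt (fun t : ℝ => t*q*y^2/x + (t+q-2*t*q)*y)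
      (q*y^2/x + (1-2*q)*y) p := by
    have h1 : HasDerivAt (fun t : ℝ => t*q*y^2/x) (1*q*y^2/x) p :=
      (((hasDerivAt_id' p).mul_const q).mul_const (y^2)).div_const x
    have h2 : HasDerivAt (fun t : ℝ => (t+q-2*t*q)*y) ((1 - 2*1*q)*y) p :=
      (((hasDerivAt_id' p).add_const q).sub
        (((hasDerivAt_id' p).const_mul 2).mul_const q)).mul_const y
    exact (h1.add h2).congr_d (by ring)
  have hL1d : HasDerivAt (fun t : ℝ => -1/(1-t) - (y-x)/((1-t)*x+t*y))
      (-1/(1-p)^2 + (y-x)^2/((1-p)*x+p*y)^2) p := by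
    have p1 : HasDerivAt (fun t : ℝ => -1/(1-t))
        ((0*(1-p) - (-1)*(0-1))/(1-p)^2) p :=
      (hasDerivAt_const p (-1:ℝ)).div h1t h1p.ne'
    have p2 : HasDerivAt (fun t : ℝ => (y-x)/((1-t)*x+t*y))
        ((0*((1-p)*x+p*y) - (y-x)*(y-x))/((1-p)*x+p*y)^2) p :=
      (hasDerivAt_const p (y-x)).div hA' hA.ne'
    exact (p1.sub p2).congr_d (by ring)
  have hL2d : HasDerivAt (fun t : ℝ => 1/t - (y-x)/((1-t)*x+t*y))
      (-1/p^2 + (y-x)^2/((1-p)*x+p*y)^2) p := by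
    have p1 : HasDerivAt (fun t : ℝ => 1/t) ((0*p - 1*1)/p^2) p :=
      (hasDerivAt_const p (1:ℝ)).div (hasDerivAt_id' p) hp0.ne'
    have p2 : HasDerivAt (fun t : ℝ => (y-x)/((1-t)*x+t*y))
        ((0*((1-p)*x+p*y) - (y-x)*(y-x))/((1-p)*x+p*y)^2) p :=
      (hasDerivAt_const p (y-x)).div hA' hA.ne'
    exact (p1.sub p2).congr_d (by ring)
  have d0 : HasDerivAt (fun _ : ℝ => -(q*y)) 0 p := hasDerivAt_const p _
  have d1 := hL1.const_mul (-((1-q)*x))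
  have d2 := hT1.mul hL1d
  have d3 := hL2.const_mul (q*y^2/x + (1-2*q)*y)
  have d4 := hT2.mul hL2d
  simp only [gdAux, gddAux]
  exact ((d0.add (d1.add d2)).add (d3.add d4)).neg.congr_d (by ring)

lemma gddAux_eq (hx : 0 < x) (hy : 0 < y) (hp0 : 0 < p) (hp1 : p < 1) :
    gddAux x y q p = -((p - q) * x * y / ((1 - p) * p ^ 2 * ((1-p)*x+p*y))) := by
  have h1p : (1:ℝ) - p ≠ 0 := by linarith
  have hA : ((1-p)*x+p*y) ≠ 0 := (APos hx hy hp0 hp1).ne'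
  simp only [gddAux]
  have hp : p ≠ 0 := hp0.ne'
  have hx' : x ≠ 0 := hx.ne'
  generalize hB : (1-p)*x+p*y = B at hA ⊢
  field_simp
  subst hB
  ring

end aux

/-- The closed-form scaled information cost `G(p)` of the buzzer protocol is twice
differentiable on `(q,1)`, with `G″(p) = −(p − q)·x·y/((1−p)·p²·A(p))` there. -/
theorem stmt_11 (x y q : ℝ) (hx : 0 < x) (hy : 0 < y) (hq0 : 0 < q) (hq1 : q < 1) :
    let A : ℝ → ℝ := fun p => (1 - p) * x + p * y
    let G : ℝ → ℝ := fun p =>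
      -(q * (1 - p) * y
        + (1 - p) * (1 - q) * x * Real.log ((1 - p) * x / A p)
        + (p * q * y ^ 2 / x + (p + q - 2 * p * q) * y) * Real.log (p * y / A p))
    (∀ p ∈ Set.Ioo q 1, DifferentiableAt ℝ G p ∧ DifferentiableAt ℝ (deriv G) p) ∧
    (∀ p ∈ Set.Ioo q 1,
      deriv (deriv G) p = -((p - q) * x * y / ((1 - p) * p ^ 2 * A p))) := by
  intro A G
  have hsub : Set.Ioo q 1 ⊆ Set.Ioo (0:ℝ) 1 := fun p hp => ⟨hq0.trans hp.1, hp.2⟩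
  have hEq : Set.EqOn G (fun t => gtAux x y q t) (Set.Ioo (0:ℝ) 1) := by
    intro p hp
    have hp0 := hp.1
    have hp1 := hp.2
    have h1p : (0:ℝ) < 1 - p := by linarith
    have hA : 0 < (1-p)*x+p*y := APos hx hy hp0 hp1
    simp only [G, A, gtAux]
    rw [Real.log_div (by positivity) hA.ne', Real.log_mul h1p.ne' hx.ne',
      Real.log_div (by positivity) hA.ne', Real.log_mul hp0.ne' hy.ne']
  have hd1 : ∀ p ∈ Set.Ioo (0:ℝ) 1, HasDerivAt G (gdAux x y q p) p := by
    intro p hp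
    exact (hasDerivAt_gtAux hx hy hp.1 hp.2).congr_of_eventuallyEq
      (Filter.eventuallyEq_of_mem (isOpen_Ioo.mem_nhds hp) hEq)
  have hderiv : Set.EqOn (deriv G) (fun t => gdAux x y q t) (Set.Ioo (0:ℝ) 1) :=
    fun p hp => (hd1 p hp).deriv
  have hd2 : ∀ p ∈ Set.Ioo (0:ℝ) 1, HasDerivAt (deriv G) (gddAux x y q p) p := by
    intro p hp
    exact (hasDerivAt_gdAux hx hy hp.1 hp.2).congr_of_eventuallyEq
      (Filter.eventuallyEq_of_mem (isOpen_Ioo.mem_nhds hp) hderiv)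
  refine ⟨fun p hp => ⟨(hd1 p (hsub hp)).differentiableAt,
    (hd2 p (hsub hp)).differentiableAt⟩, fun p hp => ?_⟩
  have hp' := hsub hp
  rw [(hd2 p hp').deriv, gddAux_eq hx hy hp'.1 hp'.2]
end

section
/- Fix reals q, c with 0 < q < c ≤ 1, and define Ψ(p) = (1 − q/p)·(c − p)² + 2pq·∫_p^c ((c − ℓ)²/ℓ³) dℓ for p ∈ (q, c). Then Ψ is twice differentiable on (q, c), and its second derivative satisfies Ψ″(p) = 2·(1 − q/p) for every p ∈ (q, c). -/
open Set MeasureTheory intervalIntegral Topology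

/-- The closed-form potential `Ψ(p) = Φ_{c,(p,q)}` of the buzzer protocol is twice
differentiable on `(q,c)`, with `Ψ″(p) = 2·(1 − q/p)` there. -/
theorem stmt_12 (q c : ℝ) (hq : 0 < q) (hqc : q < c) (hc1 : c ≤ 1) :
    let Ψ : ℝ → ℝ := fun p =>
      (1 - q / p) * (c - p) ^ 2 + 2 * p * q * ∫ ℓ in p..c, (c - ℓ) ^ 2 / ℓ ^ 3
    (∀ p ∈ Set.Ioo q c, DifferentiableAt ℝ Ψ p ∧ DifferentiableAt ℝ (deriv Ψ) p) ∧
    (∀ p ∈ Set.Ioo q c, deriv (deriv Ψ) p = 2 * (1 - q / p)) := by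
  intro Ψ
  set g : ℝ → ℝ := fun ℓ => (c - ℓ) ^ 2 / ℓ ^ 3 with hgdef
  set F : ℝ → ℝ := fun p => ∫ ℓ in p..c, g ℓ with hFdef
  have hgc : ContinuousOn g (Set.Ioi (0:ℝ)) := by
    intro x hx
    have hx0 : (x:ℝ) ≠ 0 := ne_of_gt hx
    exact (((continuousAt_const.sub continuousAt_id).pow 2).div
      (continuousAt_id.pow 3) (pow_ne_zero 3 hx0)).continuousWithinAt
  -- derivative of F
  have hF : ∀ p ∈ Set.Ioo q c, HasDerivAt F (-(g p)) p := by
    intro p hp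
    have hp0 : 0 < p := lt_trans hq hp.1
    have hsub : Set.uIcc p c ⊆ Set.Ioi (0:ℝ) := by
      rw [Set.uIcc_of_le (le_of_lt hp.2)]
      exact fun x hx => lt_of_lt_of_le hp0 hx.1
    have hint : IntervalIntegrable g volume p c :=
      (hgc.mono hsub).intervalIntegrable
    have hmeas : StronglyMeasurableAtFilter g (𝓝 p) :=
      hgc.stronglyMeasurableAtFilter isOpen_Ioi p hp0
    have hca : ContinuousAt g p :=
      ((continuousAt_const.sub continuousAt_id).pow 2).div
        (continuousAt_id.pow 3) (pow_ne_zero 3 (ne_of_gt hp0))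
    exact intervalIntegral.integral_hasDerivAt_left hint hmeas hca
  -- first derivative of Ψ
  set D : ℝ → ℝ := fun p =>
    -(q / p ^ 2) * (c - p) ^ 2 - 2 * (1 - q / p) * (c - p) + 2 * q * F p with hDdef
  have hΨ' : ∀ p ∈ Set.Ioo q c, HasDerivAt Ψ (D p) p := by
    intro p hp
    have hp0 : 0 < p := lt_trans hq hp.1
    have hp0' : (p:ℝ) ≠ 0 := ne_of_gt hp0
    have h1 : HasDerivAt (fun x : ℝ => 1 - q / x) (-(q * (-(p^2)⁻¹))) p := by
      simpa [div_eq_mul_inv] using ((hasDerivAt_inv hp0').const_mul q).const_sub 1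
    have h2 : HasDerivAt (fun x : ℝ => (c - x) ^ 2)
        (2 * (c - p) ^ 1 * (0 - 1)) p := by
      exact ((hasDerivAt_const p c).sub (hasDerivAt_id p)).pow 2
    have h3 : HasDerivAt (fun x : ℝ => 2 * x * q) (2 * 1 * q) p :=
      ((hasDerivAt_id p).const_mul 2).mul_const q
    have h4 := (h1.mul h2).add (h3.mul (hF p hp))
    have h5 : HasDerivAt Ψ
        ((-(q * (-(p^2)⁻¹)) * (c - p)^2 + (1 - q/p) * (2 * (c - p)^1 * (0 - 1)))
          + (2 * 1 * q * F p + 2 * p * q * (-(g p)))) p := h4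
    convert h5 using 1
    simp only [hDdef, hgdef]
    field_simp
    ring
  have hEq : Set.EqOn (deriv Ψ) D (Set.Ioo q c) := fun p hp => (hΨ' p hp).deriv
  -- second derivative
  have hD' : ∀ p ∈ Set.Ioo q c, HasDerivAt D (2 * (1 - q / p)) p := by
    intro p hp
    have hp0 : 0 < p := lt_trans hq hp.1
    have hp0' : (p:ℝ) ≠ 0 := ne_of_gt hp0
    have ha1 : HasDerivAt (fun x : ℝ => -(q / x ^ 2))
        (q * (2 * p * ((p^2)^2)⁻¹)) p := by
      have : HasDerivAt (fun x : ℝ => x ^ 2) (2 * p ^ 1) p := by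
        simpa using hasDerivAt_pow 2 p
      simpa [div_eq_mul_inv, Pi.neg_def] using (((this.inv (pow_ne_zero 2 hp0')).const_mul q)).neg
    have h2 : HasDerivAt (fun x : ℝ => (c - x) ^ 2)
        (2 * (c - p) ^ 1 * (0 - 1)) p :=
      ((hasDerivAt_const p c).sub (hasDerivAt_id p)).pow 2
    have hb1 : HasDerivAt (fun x : ℝ => 2 * (1 - q / x))
        (2 * (-(q * (-(p^2)⁻¹)))) p := by
      have h1 : HasDerivAt (fun x : ℝ => 1 - q / x) (-(q * (-(p^2)⁻¹))) p := by
        simpa [div_eq_mul_inv] using ((hasDerivAt_inv hp0').const_mul q).const_sub 1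
      exact h1.const_mul 2
    have hb2 : HasDerivAt (fun x : ℝ => c - x) (0 - 1) p :=
      (hasDerivAt_const p c).sub (hasDerivAt_id p)
    have hc3 : HasDerivAt (fun x : ℝ => 2 * q * F x) (2 * q * (-(g p))) p :=
      (hF p hp).const_mul (2 * q)
    have h4 := ((ha1.mul h2).sub (hb1.mul hb2)).add hc3
    have h5 : HasDerivAt D
        ((q * (2 * p * ((p^2)^2)⁻¹) * (c - p)^2
            + -(q / p^2) * (2 * (c - p)^1 * (0 - 1))
          - (2 * (-(q * (-(p^2)⁻¹))) * (c - p) + 2 * (1 - q/p) * (0 - 1)))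
          + 2 * q * (-(g p))) p := h4
    convert h5 using 1
    simp only [hgdef]
    field_simp
    ring
  have hEv : ∀ p ∈ Set.Ioo q c, deriv Ψ =ᶠ[nhds p] D := fun p hp =>
    Filter.eventuallyEq_of_mem (isOpen_Ioo.mem_nhds hp) hEq
  refine ⟨fun p hp => ⟨(hΨ' p hp).differentiableAt, ?_⟩, fun p hp => ?_⟩
  · exact (Filter.EventuallyEq.differentiableAt_iff (hEv p hp)).2
      (hD' p hp).differentiableAt
  · rw [Filter.EventuallyEq.deriv_eq (hEv p hp)]
    exact (hD' p hp).deriv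
end

section
/- Fix reals q, c with 0 < q < c < 1, and define Φ : (0,1) → ℝ piecewise by: Φ(p) = (1 − p/q)·(c − q)² + 2pq·∫_q^c ((c − ℓ)²/ℓ³) dℓ for 0 < p ≤ q; Φ(p) = (1 − q/p)·(c − p)² + 2pq·∫_p^c ((c − ℓ)²/ℓ³) dℓ for q ≤ p ≤ c; and Φ(p) = 0 for c ≤ p < 1. Then Φ is differentiable at every point of (0,1). -/
open Set Filter

/-- Antiderivative of `(c-ℓ)²/ℓ³` on `(0,∞)`. -/
noncomputable def stmtG (c x : ℝ) : ℝ := -c ^ 2 / (2 * x ^ 2) + 2 * c / x + Real.log x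

lemma hasDerivAt_stmtG (c x : ℝ) (hx : 0 < x) :
    HasDerivAt (stmtG c) ((c - x) ^ 2 / x ^ 3) x := by
  have h1 : HasDerivAt (fun x : ℝ => -c ^ 2 / (2 * x ^ 2)) (c ^ 2 / x ^ 3) x := by
    have h := (hasDerivAt_const x (-c ^ 2)).div ((hasDerivAt_pow 2 x).const_mul 2)
      (by positivity)
    refine h.congr_deriv ?_
    field_simp
    ring
  have h2 : HasDerivAt (fun x : ℝ => 2 * c / x) (-(2 * c) / x ^ 2) x := by
    have h := (hasDerivAt_const x (2 * c)).div (hasDerivAt_id x) hx.ne'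
    refine h.congr_deriv ?_
    simp only [id_eq]
    field_simp
    ring
  have h3 := Real.hasDerivAt_log hx.ne'
  have h := (h1.add h2).add h3
  refine h.congr_deriv ?_
  field_simp
  ring

lemma stmt_integral_eq (c : ℝ) (hc : 0 < c) (p : ℝ) (hp : 0 < p) :
    ∫ ℓ in p..c, (c - ℓ) ^ 2 / ℓ ^ 3 = stmtG c c - stmtG c p := by
  apply intervalIntegral.integral_eq_sub_of_hasDerivAt (f := stmtG c)
    (f' := fun ℓ => (c - ℓ) ^ 2 / ℓ ^ 3)
  · intro x hx
    exact hasDerivAt_stmtG c x (lt_of_lt_of_le (lt_min hp hc) hx.1)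
  · apply ContinuousOn.intervalIntegrable
    apply ContinuousOn.div (by fun_prop) (by fun_prop)
    intro x hx
    have : 0 < x := lt_of_lt_of_le (lt_min hp hc) hx.1
    positivity

/-- Closed form of the middle branch. -/
noncomputable def stmtg (q c p : ℝ) : ℝ :=
  (1 - q * p⁻¹) * (c - p) ^ 2 + 2 * q * (p * (stmtG c c - stmtG c p))

lemma hasDerivAt_stmtg (q c p : ℝ) (hp : 0 < p) :
    HasDerivAt (stmtg q c)
      (q * (p ^ 2)⁻¹ * (c - p) ^ 2 + (1 - q * p⁻¹) * (2 * (c - p) * (-1))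
        + 2 * q * (1 * (stmtG c c - stmtG c p) + p * (-((c - p) ^ 2 / p ^ 3)))) p := by
  have h1 : HasDerivAt (fun p : ℝ => 1 - q * p⁻¹) (q * (p ^ 2)⁻¹) p := by
    have h := ((hasDerivAt_inv hp.ne').const_mul q).const_sub 1
    refine h.congr_deriv ?_
    ring
  have h2 : HasDerivAt (fun p : ℝ => (c - p) ^ 2) (2 * (c - p) * (-1)) p := by
    have h := ((hasDerivAt_id p).const_sub c).pow 2
    refine h.congr_deriv ?_
    simp only [id_eq]
    push_cast
    ring
  have h3 : HasDerivAt (fun p : ℝ => stmtG c c - stmtG c p) (-((c - p) ^ 2 / p ^ 3)) p :=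
    (hasDerivAt_stmtG c p hp).const_sub (stmtG c c)
  exact (h1.mul h2).add (((hasDerivAt_id p).mul h3).const_mul (2 * q))

/-- The piecewise closed-form potential function `Φ_{c,(p,q)}` of the buzzer protocol
is differentiable at every point of `(0,1)`. -/
theorem stmt_13 (q c : ℝ) (hq : 0 < q) (hqc : q < c) (hc1 : c < 1) :
    let Φ : ℝ → ℝ := fun p =>
      if p ≤ q then
        (1 - p / q) * (c - q) ^ 2 + 2 * p * q * ∫ ℓ in q..c, (c - ℓ) ^ 2 / ℓ ^ 3
      else if p ≤ c then
        (1 - q / p) * (c - p) ^ 2 + 2 * p * q * ∫ ℓ in p..c, (c - ℓ) ^ 2 / ℓ ^ 3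
      else 0
    ∀ p ∈ Set.Ioo (0 : ℝ) 1, DifferentiableAt ℝ Φ p := by
  intro Φ p hp
  have hc0 : 0 < c := hq.trans hqc
  have hΦ : ∀ x : ℝ, Φ x =
      if x ≤ q then
        (1 - x / q) * (c - q) ^ 2 + 2 * x * q * ∫ ℓ in q..c, (c - ℓ) ^ 2 / ℓ ^ 3
      else if x ≤ c then
        (1 - q / x) * (c - x) ^ 2 + 2 * x * q * ∫ ℓ in x..c, (c - ℓ) ^ 2 / ℓ ^ 3
      else 0 := fun _ => rfl
  set I : ℝ := ∫ ℓ in q..c, (c - ℓ) ^ 2 / ℓ ^ 3 with hIdef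
  have hIq : I = stmtG c c - stmtG c q := stmt_integral_eq c hc0 q hq
  have hLmid : ∀ x : ℝ, q ≤ x → x ≤ c → Φ x = stmtg q c x := by
    intro x hqx hxc
    rcases eq_or_lt_of_le hqx with rfl | hlt
    · rw [hΦ q, if_pos le_rfl, hIq]
      simp only [stmtg]
      field_simp
    · have hx0 : 0 < x := hq.trans hlt
      rw [hΦ x, if_neg (not_le.mpr hlt), if_pos hxc, stmt_integral_eq c hc0 x hx0]
      simp only [stmtg, div_eq_mul_inv]
      ring
  have hΦ0 : ∀ x : ℝ, c ≤ x → Φ x = 0 := by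
    intro x hcx
    rcases eq_or_lt_of_le hcx with rfl | hlt
    · rw [hΦ c, if_neg (not_le.mpr hqc), if_pos le_rfl, intervalIntegral.integral_same]
      ring
    · rw [hΦ x, if_neg (not_le.mpr (hqc.trans hlt)), if_neg (not_le.mpr hlt)]
  rcases lt_trichotomy p q with h | heq | h
  · -- p < q : Φ agrees with the affine first branch near p
    have hev : Φ =ᶠ[nhds p] fun x => (1 - x / q) * (c - q) ^ 2 + 2 * x * q * I := by
      filter_upwards [Iio_mem_nhds h] with x hx
      rw [hΦ x, if_pos (le_of_lt hx)]
    have hdL : DifferentiableAt ℝ (fun x : ℝ => (1 - x / q) * (c - q) ^ 2 + 2 * x * q * I) p := by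
      apply DifferentiableAt.add
      · exact ((differentiableAt_fun_id.div_const q).const_sub 1).mul_const _
      · exact ((differentiableAt_fun_id.const_mul 2).mul_const q).mul_const I
    exact hdL.congr_of_eventuallyEq hev
  · -- p = q : glue the two branches
    rw [heq]
    have hgd := hasDerivAt_stmtg q c q hq
    have hLd : HasDerivAt (fun x : ℝ => (1 - x / q) * (c - q) ^ 2 + 2 * x * q * I)
        (q * (q ^ 2)⁻¹ * (c - q) ^ 2 + (1 - q * q⁻¹) * (2 * (c - q) * (-1))
          + 2 * q * (1 * (stmtG c c - stmtG c q) + q * (-((c - q) ^ 2 / q ^ 3)))) q := by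
      have h1 : HasDerivAt (fun x : ℝ => (1 - x / q) * (c - q) ^ 2)
          (-(1 / q) * (c - q) ^ 2) q := by
        exact (((hasDerivAt_id q).div_const q).const_sub 1).mul_const ((c - q) ^ 2)
      have h2 : HasDerivAt (fun x : ℝ => 2 * x * q * I) (2 * 1 * q * I) q :=
        (((hasDerivAt_id q).const_mul 2).mul_const q).mul_const I
      have h := h1.add h2
      refine h.congr_deriv ?_
      rw [hIq]
      field_simp
      ring
    have hleft := hLd.hasDerivWithinAt (s := Iic q) |>.congr (f₁ := Φ)
      (fun y hy => by rw [hΦ y, if_pos (mem_Iic.mp hy)]) (by rw [hΦ q, if_pos le_rfl])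
    have hg := hgd.hasDerivWithinAt (s := Icc q c) |>.congr (f₁ := Φ)
      (fun y hy => hLmid y hy.1 hy.2) (hLmid q le_rfl hqc.le)
    have hmem : Icc q c ∈ nhdsWithin q (Ici q) := by
      apply Filter.mem_of_superset (inter_mem_nhdsWithin (Ici q) (Iio_mem_nhds hqc))
      rintro y ⟨hy1, hy2⟩
      exact ⟨hy1, le_of_lt hy2⟩
    have hright := hg.mono_of_mem_nhdsWithin (s := Ici q) hmem
    have := hleft.union hright
    rw [Iic_union_Ici, hasDerivWithinAt_univ] at this
    exact this.differentiableAt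
  · rcases lt_trichotomy p c with h2 | heq | h2
    · -- q < p < c : Φ agrees with stmtg near p
      have hev : Φ =ᶠ[nhds p] stmtg q c := by
        filter_upwards [isOpen_Ioo.mem_nhds (⟨h, h2⟩ : p ∈ Ioo q c)] with x hx
        exact hLmid x hx.1.le hx.2.le
      exact ((hasDerivAt_stmtg q c p (hq.trans h)).differentiableAt).congr_of_eventuallyEq hev
    · -- p = c : glue the second branch with 0
      rw [heq]
      have hgd := hasDerivAt_stmtg q c c hc0
      have hd0 : (q * (c ^ 2)⁻¹ * (c - c) ^ 2 + (1 - q * c⁻¹) * (2 * (c - c) * (-1))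
          + 2 * q * (1 * (stmtG c c - stmtG c c) + c * (-((c - c) ^ 2 / c ^ 3)))) = 0 := by
        simp
      rw [hd0] at hgd
      have hleft : HasDerivWithinAt Φ 0 (Iic c) c := by
        have hg : HasDerivWithinAt Φ 0 (Icc q c) c := by
          apply (hgd.hasDerivWithinAt).congr
          · intro y hy
            exact hLmid y hy.1 hy.2
          · exact hLmid c hqc.le le_rfl
        apply hg.mono_of_mem_nhdsWithin
        apply Filter.mem_of_superset (inter_mem_nhdsWithin (Iic c) (Ioi_mem_nhds hqc))
        rintro y ⟨hy1, hy2⟩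
        exact ⟨le_of_lt hy2, hy1⟩
      have hright : HasDerivWithinAt Φ 0 (Ici c) c := by
        apply ((hasDerivAt_const c (0 : ℝ)).hasDerivWithinAt).congr
        · intro y hy
          exact hΦ0 y hy
        · exact hΦ0 c le_rfl
      have := hleft.union hright
      rw [Iic_union_Ici, hasDerivWithinAt_univ] at this
      exact this.differentiableAt
    · -- c < p : Φ vanishes near p
      have hev : Φ =ᶠ[nhds p] fun _ => (0 : ℝ) := by
        filter_upwards [Ioi_mem_nhds h2] with x hx
        exact hΦ0 x hx.le
      exact (differentiableAt_const 0).congr_of_eventuallyEq hev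
end

section
/- For all reals x, y > 0, there exists a constant C > 0 (one may take C = 2·max_{p∈[0,1]} (1−p)·p·((1−p)x + p·y)/(x·y)) such that for all q, c with 0 < q < c < 1, the function p ↦ C·G(p) + (1 − q/p)·(c − p)² + 2pq·∫_p^c ((c − ℓ)²/ℓ³) dℓ is concave on the interval [q, c], where G(p) = −( q·(1−p)·y + (1−p)·(1−q)·x·ln((1−p)·x/A(p)) + (p·q·y²/x + (p + q − 2pq)·y)·ln(p·y/A(p)) ) with A(p) = (1−p)·x + p·y and ln the natural logarithm. -/
/-- Antiderivative of `(c - t)^2 / t^3`. -/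
lemma hasDerivAt_aux_F (c t : ℝ) (ht : t ≠ 0) :
    HasDerivAt (fun s : ℝ => Real.log s + 2 * c / s - c ^ 2 / (2 * s ^ 2))
      ((c - t) ^ 2 / t ^ 3) t := by
  have h1 : HasDerivAt (fun s : ℝ => Real.log s) t⁻¹ t := Real.hasDerivAt_log ht
  have h2 := (hasDerivAt_const t (2 * c)).div (hasDerivAt_id t) ht
  have h3 := (hasDerivAt_const t (c ^ 2)).div ((hasDerivAt_pow 2 t).const_mul (2 : ℝ))
    (by simpa using mul_ne_zero (two_ne_zero) (pow_ne_zero 2 ht))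
  refine ((h1.add h2).sub h3).congr_deriv ?_
  simp only [Pi.add_apply, Pi.sub_apply, Pi.mul_apply, Pi.div_apply, Pi.pow_apply, Pi.neg_apply, id_eq]
  field_simp
  ring

set_option maxHeartbeats 1600000

/-- For all `x, y > 0` there is a constant `C > 0` such that for all `0 < q < c < 1`,
the function `p ↦ C·G(p) + Φ_{c,(p,q)}` is concave on `[q,c]`, where `G` is the
closed-form scaled information cost of the buzzer protocol and the remaining term is
its closed-form potential function. -/
theorem stmt_18 (x y : ℝ) (hx : 0 < x) (hy : 0 < y) :
    ∃ C : ℝ, 0 < C ∧ ∀ q c : ℝ, 0 < q → q < c → c < 1 →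
      ConcaveOn ℝ (Set.Icc q c) (fun p : ℝ =>
        C * (-(q * (1 - p) * y
            + (1 - p) * (1 - q) * x * Real.log ((1 - p) * x / ((1 - p) * x + p * y))
            + (p * q * y ^ 2 / x + (p + q - 2 * p * q) * y)
                * Real.log (p * y / ((1 - p) * x + p * y))))
          + (1 - q / p) * (c - p) ^ 2
          + 2 * p * q * ∫ ℓ in p..c, (c - ℓ) ^ 2 / ℓ ^ 3) := by
  refine ⟨(x + y) / (x * y), by positivity, ?_⟩
  intro q c hq hqc hc1
  have hx' : x ≠ 0 := ne_of_gt hx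
  have hy' : y ≠ 0 := ne_of_gt hy
  set C : ℝ := (x + y) / (x * y) with hCdef
  set F : ℝ → ℝ := fun t => Real.log t + 2 * c / t - c ^ 2 / (2 * t ^ 2) with hFdef
  set g : ℝ → ℝ := fun p =>
      C * (-(q * (1 - p) * y
          + (1 - p) * (1 - q) * x
              * (Real.log (1 - p) + Real.log x - Real.log ((1 - p) * x + p * y))
          + (p * q * y ^ 2 / x + (p + q - 2 * p * q) * y)
              * (Real.log p + Real.log y - Real.log ((1 - p) * x + p * y))))
        + (1 - q / p) * (c - p) ^ 2 + 2 * p * q * (F c - F p) with hgdef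
  set g1 : ℝ → ℝ := fun p =>
      C * (-(-(q * y)
          + (-((1 - q) * x))
              * (Real.log (1 - p) + Real.log x - Real.log ((1 - p) * x + p * y))
          + (1 - p) * (1 - q) * x
              * (-(1 / (1 - p)) - (y - x) / ((1 - p) * x + p * y))
          + (q * y ^ 2 / x + (1 - 2 * q) * y)
              * (Real.log p + Real.log y - Real.log ((1 - p) * x + p * y))
          + (p * q * y ^ 2 / x + (p + q - 2 * p * q) * y)
              * (1 / p - (y - x) / ((1 - p) * x + p * y))))
        + q / p ^ 2 * (c - p) ^ 2 - 2 * (1 - q / p) * (c - p)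
        + 2 * q * (F c - F p) - 2 * p * q * ((c - p) ^ 2 / p ^ 3) with hg1def
  set g2 : ℝ → ℝ := fun p =>
      (1 - q / p) * (2 - (x + y) / ((1 - p) * p * ((1 - p) * x + p * y))) with hg2def
  clear_value C F
  -- first derivative
  have hder1 : ∀ p : ℝ, 0 < p → p < 1 → HasDerivAt g (g1 p) p := by
    intro p hp0' hp1'
    have hp0 : p ≠ 0 := ne_of_gt hp0'
    have h1pos : (0 : ℝ) < 1 - p := by linarith
    have h1p : (1 : ℝ) - p ≠ 0 := ne_of_gt h1pos
    have hApos : (0 : ℝ) < (1 - p) * x + p * y :=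
      add_pos (mul_pos h1pos hx) (mul_pos hp0' hy)
    have hA : (1 - p) * x + p * y ≠ 0 := ne_of_gt hApos
    have hA' := (((hasDerivAt_id p).const_sub 1).mul_const x).add
      ((hasDerivAt_id p).mul_const y)
    have hlog1p := ((hasDerivAt_id p).const_sub 1).log h1p
    have hlogp := Real.hasDerivAt_log hp0
    have hlogA := hA'.log hA
    have hinner1 := (hlog1p.add_const (Real.log x)).sub hlogA
    have hinner2 := (hlogp.add_const (Real.log y)).sub hlogA
    have hT1 := (((hasDerivAt_id p).const_sub 1).const_mul q).mul_const y
    have hu := (((hasDerivAt_id p).const_sub 1).mul_const (1 - q)).mul_const x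
    have hT2 := hu.mul hinner1
    have hB := ((((hasDerivAt_id p).mul_const q).mul_const (y ^ 2)).div_const x).add
      ((((hasDerivAt_id p).add_const q).sub
          (((hasDerivAt_id p).const_mul 2).mul_const q)).mul_const y)
    have hT3 := hB.mul hinner2
    have hG := ((hT1.add hT2).add hT3).neg.const_mul C
    have hqp := ((hasDerivAt_const p q).div (hasDerivAt_id p) hp0).const_sub 1
    have hcp := (hasDerivAt_id p).const_sub c
    have hPhi1 := hqp.mul (hcp.pow 2)
    have hF : HasDerivAt F ((c - p) ^ 2 / p ^ 3) p := by
      rw [hFdef]; exact hasDerivAt_aux_F c p hp0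
    have hPhi2 := (((hasDerivAt_id p).const_mul 2).mul_const q).mul (hF.const_sub (F c))
    have H := (hG.add hPhi1).add hPhi2
    rw [hgdef, hg1def]
    refine H.congr_deriv ?_
    simp only [Pi.add_apply, Pi.sub_apply, Pi.mul_apply, Pi.div_apply, Pi.pow_apply, Pi.neg_apply, id_eq]
    field_simp
    ring
  -- second derivative
  have hder2 : ∀ p : ℝ, 0 < p → p < 1 → HasDerivAt g1 (g2 p) p := by
    intro p hp0' hp1'
    have hp0 : p ≠ 0 := ne_of_gt hp0'
    have h1pos : (0 : ℝ) < 1 - p := by linarith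
    have h1p : (1 : ℝ) - p ≠ 0 := ne_of_gt h1pos
    have hApos : (0 : ℝ) < (1 - p) * x + p * y :=
      add_pos (mul_pos h1pos hx) (mul_pos hp0' hy)
    have hA : (1 - p) * x + p * y ≠ 0 := ne_of_gt hApos
    have hA' := (((hasDerivAt_id p).const_sub 1).mul_const x).add
      ((hasDerivAt_id p).mul_const y)
    have hlog1p := ((hasDerivAt_id p).const_sub 1).log h1p
    have hlogp := Real.hasDerivAt_log hp0
    have hlogA := hA'.log hA
    have hinner1 := (hlog1p.add_const (Real.log x)).sub hlogA
    have hinner2 := (hlogp.add_const (Real.log y)).sub hlogA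
    have hu := (((hasDerivAt_id p).const_sub 1).mul_const (1 - q)).mul_const x
    have hB := ((((hasDerivAt_id p).mul_const q).mul_const (y ^ 2)).div_const x).add
      ((((hasDerivAt_id p).add_const q).sub
          (((hasDerivAt_id p).const_mul 2).mul_const q)).mul_const y)
    have hs1 := hasDerivAt_const p (-(q * y))
    have hs2 := hinner1.const_mul (-((1 - q) * x))
    have hr1 := (((hasDerivAt_const p (1 : ℝ)).div ((hasDerivAt_id p).const_sub 1) h1p).neg).sub
      ((hasDerivAt_const p (y - x)).div hA' hA)
    have hs3 := hu.mul hr1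
    have hs4 := hinner2.const_mul (q * y ^ 2 / x + (1 - 2 * q) * y)
    have hr2 := ((hasDerivAt_const p (1 : ℝ)).div (hasDerivAt_id p) hp0).sub
      ((hasDerivAt_const p (y - x)).div hA' hA)
    have hs5 := hB.mul hr2
    have hsum : HasDerivAt (fun p : ℝ =>
        -(q * y)
          + (-((1 - q) * x))
              * (Real.log (1 - p) + Real.log x - Real.log ((1 - p) * x + p * y))
          + (1 - p) * (1 - q) * x
              * (-(1 / (1 - p)) - (y - x) / ((1 - p) * x + p * y))
          + (q * y ^ 2 / x + (1 - 2 * q) * y)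
              * (Real.log p + Real.log y - Real.log ((1 - p) * x + p * y))
          + (p * q * y ^ 2 / x + (p + q - 2 * p * q) * y)
              * (1 / p - (y - x) / ((1 - p) * x + p * y)))
        ((p - q) * (x * y) / (p ^ 2 * (1 - p) * ((1 - p) * x + p * y))) p := by
      refine ((((hs1.add hs2).add hs3).add hs4).add hs5).congr_deriv ?_
      simp only [Pi.add_apply, Pi.sub_apply, Pi.mul_apply, Pi.div_apply, Pi.pow_apply, Pi.neg_apply, id_eq]
      field_simp
      ring
    have hG1 := hsum.neg.const_mul C
    have hqp := ((hasDerivAt_const p q).div (hasDerivAt_id p) hp0).const_sub 1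
    have hcp := (hasDerivAt_id p).const_sub c
    have hF : HasDerivAt F ((c - p) ^ 2 / p ^ 3) p := by
      rw [hFdef]; exact hasDerivAt_aux_F c p hp0
    have hP1 := ((hasDerivAt_const p q).div (hasDerivAt_pow 2 p)
      (pow_ne_zero 2 hp0)).mul (hcp.pow 2)
    have hP2 := (hqp.const_mul 2).mul hcp
    have hP3 := (hF.const_sub (F c)).const_mul (2 * q)
    have hP4 := ((((hasDerivAt_id p).const_mul 2).mul_const q).mul
      ((hcp.pow 2).div (hasDerivAt_pow 3 p) (pow_ne_zero 3 hp0)))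
    have H := (((hG1.add hP1).sub hP2).add hP3).sub hP4
    rw [hg1def, hg2def]
    refine H.congr_deriv ?_
    simp only [Pi.add_apply, Pi.sub_apply, Pi.mul_apply, Pi.div_apply, Pi.pow_apply, Pi.neg_apply, id_eq]
    rw [hCdef]
    field_simp
    ring
  -- concavity of g
  have hkey : ConcaveOn ℝ (Set.Icc q c) g := by
    apply concaveOn_of_hasDerivWithinAt2_nonpos (f' := g1) (f'' := g2) (convex_Icc q c)
    · intro p hp
      exact (hder1 p (lt_of_lt_of_le hq hp.1) (lt_of_le_of_lt hp.2 hc1)).continuousAt.continuousWithinAt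
    · intro p hp
      rw [interior_Icc] at hp
      exact (hder1 p (hq.trans hp.1) (hp.2.trans hc1)).hasDerivWithinAt
    · intro p hp
      rw [interior_Icc] at hp
      exact (hder2 p (hq.trans hp.1) (hp.2.trans hc1)).hasDerivWithinAt
    · intro p hp
      rw [interior_Icc] at hp
      have hp0' : 0 < p := hq.trans hp.1
      have h1pos : (0 : ℝ) < 1 - p := by linarith [hp.2.trans hc1]
      have hApos : (0 : ℝ) < (1 - p) * x + p * y :=
        add_pos (mul_pos h1pos hx) (mul_pos hp0' hy)
      have hD : (0 : ℝ) < (1 - p) * p * ((1 - p) * x + p * y) :=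
        mul_pos (mul_pos h1pos hp0') hApos
      have h1 : 0 ≤ 1 - q / p := by
        have : q / p ≤ 1 := (div_le_one hp0').mpr hp.1.le
        linarith
      have h2 : 2 - (x + y) / ((1 - p) * p * ((1 - p) * x + p * y)) ≤ 0 := by
        have h2d : 2 * ((1 - p) * p * ((1 - p) * x + p * y)) ≤ x + y := by
          nlinarith [mul_nonneg (mul_nonneg h1pos.le hx.le) (sq_nonneg (1 - 2 * p)),
            mul_nonneg (mul_nonneg hp0'.le hy.le) (sq_nonneg (1 - 2 * p)),
            mul_pos hp0' hx, mul_pos hp0' hy]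
        have : (2 : ℝ) ≤ (x + y) / ((1 - p) * p * ((1 - p) * x + p * y)) :=
          (le_div_iff₀ hD).mpr (by linarith)
        linarith
      rw [hg2def]
      have := mul_nonneg h1 (neg_nonneg.mpr h2)
      nlinarith [this]
  -- transfer to the original function
  apply hkey.congr
  intro p hp
  have hp0' : 0 < p := lt_of_lt_of_le hq hp.1
  have hp0 : p ≠ 0 := ne_of_gt hp0'
  have h1pos : (0 : ℝ) < 1 - p := by linarith [lt_of_le_of_lt hp.2 hc1]
  have h1p : (1 : ℝ) - p ≠ 0 := ne_of_gt h1pos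
  have hApos : (0 : ℝ) < (1 - p) * x + p * y :=
    add_pos (mul_pos h1pos hx) (mul_pos hp0' hy)
  have hA : (1 - p) * x + p * y ≠ 0 := ne_of_gt hApos
  have hi : (∫ ℓ in p..c, (c - ℓ) ^ 2 / ℓ ^ 3) = F c - F p := by
    apply intervalIntegral.integral_eq_sub_of_hasDerivAt
    · intro t ht
      rw [Set.uIcc_of_le hp.2] at ht
      rw [hFdef]
      exact hasDerivAt_aux_F c t (ne_of_gt (lt_of_lt_of_le hp0' ht.1))
    · apply ContinuousOn.intervalIntegrable
      apply ContinuousOn.div (by fun_prop) (by fun_prop)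
      intro t ht
      rw [Set.uIcc_of_le hp.2] at ht
      exact pow_ne_zero 3 (ne_of_gt (lt_of_lt_of_le hp0' ht.1))
  simp only [hgdef]
  rw [hi, Real.log_div (mul_ne_zero h1p hx') hA, Real.log_mul h1p hx',
    Real.log_div (mul_ne_zero hp0 hy') hA, Real.log_mul hp0 hy']
end
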